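/- Let D = ⟨R, C, ∅⟩ be a defeasible theory with ≺ = ∅ and R_u = ∅, and let ⟨T, F⟩ be the well-founded model of D according to ADL. Then for every α-stable set M of D: T ⊆ M and F ∩ α_D(M) = ∅. -/

import Mathlib

namespace DLWFS

universe u

/-- Ground literals over a type `A` of atoms: atoms and their classical complements. -/
inductive Lit (A : Type u) : Type u where
  | pos : A → Lit A
  | neg : A → Lit A

/-- The classical complement `p̄` of a literal `p`. -/
def Lit.compl {A : Type u} : Lit A → Lit A
  | .pos a => .neg a
  | .neg a => .pos a

/-- The three kinds of rules of a defeasible theory. -/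
inductive RuleKind : Type where
  | strict
  | defeasible
  | defeater
deriving DecidableEq

/-- A rule of a defeasible theory: a kind, a body (a set of literals) and a head literal. -/
structure DRule (A : Type u) where
  kind : RuleKind
  body : Set (Lit A)
  head : Lit A

/-- A defeasible theory `D = ⟨R, C, ≺⟩`. -/
structure DTheory (A : Type u) where
  rules : Set (DRule A)
  conflicts : Set (Set (Lit A))
  prec : DRule A → DRule A → Prop

namespace DTheory

variable {A : Type u}

/-- The strict rules `R_s`. -/
def Rs (D : DTheory A) : Set (DRule A) := {r ∈ D.rules | r.kind = RuleKind.strict}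

/-- The defeasible rules `R_d`. -/
def Rd (D : DTheory A) : Set (DRule A) := {r ∈ D.rules | r.kind = RuleKind.defeasible}

/-- The defeater rules `R_u`. -/
def Ru (D : DTheory A) : Set (DRule A) := {r ∈ D.rules | r.kind = RuleKind.defeater}

/-- `C[p]`: the conflict sets containing literal `p`. -/
def Cset (D : DTheory A) (p : Lit A) : Set (Set (Lit A)) := {c ∈ D.conflicts | p ∈ c}

/-- Structural conditions in the definition of a defeasible theory: a countable set of
rules with finite bodies, a countable set of finite conflict sets containing every
minimal conflict set `{p, ¬p}`, and an acyclic priority relation over non-strict rules. -/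
def WellFormed (D : DTheory A) : Prop :=
  D.rules.Countable ∧ D.conflicts.Countable ∧
  (∀ r ∈ D.rules, r.body.Finite) ∧
  (∀ c ∈ D.conflicts, c.Finite) ∧
  (∀ p : A, ({Lit.pos p, Lit.neg p} : Set (Lit A)) ∈ D.conflicts) ∧
  (∀ r s, D.prec r s → r.kind ≠ RuleKind.strict ∧ s.kind ≠ RuleKind.strict) ∧
  (∀ r, ¬ Relation.TransGen D.prec r r)

/-- `C = C_MIN`: the conflict sets are exactly the minimal ones `{p, ¬p}`. -/
def MinimalConflicts (D : DTheory A) : Prop :=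
  D.conflicts = {c | ∃ p : A, c = ({Lit.pos p, Lit.neg p} : Set (Lit A))}

end DTheory

/-- A 3-valued interpretation: a pair `⟨T, F⟩` of sets. -/
abbrev Interp (L : Type u) : Type u := Set L × Set L

variable {A : Type u}

/-- `S` is ADL-unfounded with respect to theory `D` and interpretation `I = ⟨T, F⟩`. -/
def ADLUnfounded (D : DTheory A) (I : Interp (Lit A)) (S : Set (Lit A)) : Prop :=
  ∀ p ∈ S,
    (∀ r ∈ D.Rs, r.head = p → (r.body ∩ (I.2 ∪ S)).Nonempty) ∧
    (∀ r ∈ D.Rd, r.head = p →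
      (r.body ∩ (I.2 ∪ S)).Nonempty ∨
      ∃ c ∈ D.conflicts, p ∈ c ∧
        ∀ q ∈ c \ {p}, ∃ s ∈ D.rules, s.head = q ∧ s.body ⊆ I.1 ∧
          (D.prec r s ∨ s.kind = RuleKind.strict))

/-- `S` is NDL-unfounded with respect to theory `D` and interpretation `I = ⟨T, F⟩`. -/
def NDLUnfounded (D : DTheory A) (I : Interp (Lit A)) (S : Set (Lit A)) : Prop :=
  ∀ p ∈ S,
    (∀ r ∈ D.Rs, r.head = p → (r.body ∩ (I.2 ∪ S)).Nonempty) ∧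
    (∀ r ∈ D.Rd, r.head = p →
      (r.body ∩ (I.2 ∪ S)).Nonempty ∨
      ∃ c ∈ D.conflicts, p ∈ c ∧
        ∀ q ∈ c \ {p}, ∃ s ∈ D.rules, s.head = q ∧ s.body ⊆ I.1 ∧
          ¬ D.prec s r)

/-- `U_D(I)` for ADL: the union of all ADL-unfounded sets. -/
def UA (D : DTheory A) (I : Interp (Lit A)) : Set (Lit A) :=
  ⋃₀ {S | ADLUnfounded D I S}

/-- `U_D(I)` for NDL: the union of all NDL-unfounded sets. -/
def UN (D : DTheory A) (I : Interp (Lit A)) : Set (Lit A) :=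
  ⋃₀ {S | NDLUnfounded D I S}

/-- `T_D(I)`: the literals having a witness of provability with respect to `I = ⟨T, F⟩`. -/
def TD (D : DTheory A) (I : Interp (Lit A)) : Set (Lit A) :=
  {p | ∃ r ∈ D.rules, r.head = p ∧ r.body ⊆ I.1 ∧
    (r.kind = RuleKind.strict ∨
      (r.kind = RuleKind.defeasible ∧
        ∀ c ∈ D.conflicts, p ∈ c →
          ∃ q ∈ c \ {p}, ∀ s ∈ D.rules, s.head = q →
            (D.prec s r ∨ (s.body ∩ I.2).Nonempty)))}

/-- `W_D` for ADL. -/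
def WA (D : DTheory A) (I : Interp (Lit A)) : Interp (Lit A) := (TD D I, UA D I)

/-- `W_D` for NDL. -/
def WN (D : DTheory A) (I : Interp (Lit A)) : Interp (Lit A) := (TD D I, UN D I)

/-- `I` is the well-founded model for the operator `W`: the least fixpoint of `W`
(componentwise order). -/
def IsWFModel {L : Type u} (W : Interp L → Interp L) (I : Interp L) : Prop :=
  W I = I ∧ ∀ J, W J = J → I.1 ⊆ J.1 ∧ I.2 ⊆ J.2

/-- A rule of a normal logic program: `head ← pos, ∼neg`. -/
structure NRule (A : Type u) where
  head : A
  pos : Set A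
  neg : Set A

/-- A normal logic program: a set of rules. -/
abbrev NProgram (A : Type u) : Type u := Set (NRule A)

/-- Structural conditions in the definition of a normal logic program: a countable
set of ground rules with finite bodies. -/
def NProgram.WellFormed (P : NProgram A) : Prop :=
  P.Countable ∧ ∀ r ∈ P, r.pos.Finite ∧ r.neg.Finite

/-- The immediate consequence operator `T_Π` on 3-valued interpretations. -/
def TP (P : NProgram A) (I : Interp A) : Set A :=
  {a | ∃ r ∈ P, r.head = a ∧ r.pos ⊆ I.1 ∧ r.neg ⊆ I.2}

/-- `S` is an unfounded set of program `P` with respect to interpretation `I = ⟨T, F⟩`. -/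
def PUnfounded (P : NProgram A) (I : Interp A) (S : Set A) : Prop :=
  ∀ p ∈ S, ∀ r ∈ P, r.head = p →
    (r.pos ∩ (I.2 ∪ S)).Nonempty ∨ (r.neg ∩ I.1).Nonempty

/-- `U_Π(I)`: the greatest unfounded set (union of all unfounded sets). -/
def UP (P : NProgram A) (I : Interp A) : Set A :=
  ⋃₀ {S | PUnfounded P I S}

/-- `W_Π(I) = ⟨T_Π(I), U_Π(I)⟩`. -/
def WP (P : NProgram A) (I : Interp A) : Interp A := (TP P I, UP P I)

/-- Transfinite iteration of an operator `W` from `⊥`, taking suprema at limit ordinals. -/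
noncomputable def iterW {α : Type*} [CompleteLattice α] (W : α → α) : Ordinal.{0} → α :=
  fun o =>
    Ordinal.limitRecOn (motive := fun _ => α) o ⊥ (fun _ ih => W ih)
      (fun o' _ ih => ⨆ x : Set.Iio o', ih x.1 x.2)

/-- One step of the immediate consequence operator for a set of defeasible-theory rules. -/
def TRstep (R : Set (DRule A)) (S : Set (Lit A)) : Set (Lit A) :=
  {p | ∃ r ∈ R, r.head = p ∧ r.body ⊆ S}

/-- The finite iterates `T_R ↑ n`. -/
def TRiter (R : Set (DRule A)) : ℕ → Set (Lit A)
  | 0 => ∅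
  | n + 1 => TRstep R (TRiter R n)

/-- `Cl(R) = T_R ↑ ω`. -/
def ClR (R : Set (DRule A)) : Set (Lit A) := ⋃ n, TRiter R n

/-- The `α`-reduct `D_α^S` of a defeasible theory. -/
def alphaReduct (D : DTheory A) (S : Set (Lit A)) : Set (DRule A) :=
  D.Rs ∪ {r ∈ D.Rd | ∀ c ∈ D.conflicts, r.head ∈ c → ∃ q ∈ c \ {r.head}, q ∉ S}

/-- The ambiguity-propagating operator `α_D(S) = Cl(D_α^S)`. -/
def alphaOp (D : DTheory A) (S : Set (Lit A)) : Set (Lit A) := ClR (alphaReduct D S)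

/-- The `β`-reduct `D_β^S` of a defeasible theory. -/
def betaReduct (D : DTheory A) (S : Set (Lit A)) : Set (DRule A) :=
  D.Rs ∪ {r ∈ D.Rd | ∀ c ∈ D.conflicts, r.head ∈ c →
    ∃ q ∈ c \ {r.head}, ∀ s ∈ D.rules, s.head = q → (¬ s.body ⊆ S ∨ D.prec s r)}

/-- The ambiguity-blocking operator `β_D(S) = Cl(D_β^S)`. -/
def betaOp (D : DTheory A) (S : Set (Lit A)) : Set (Lit A) := ClR (betaReduct D S)

/-- `S` is an `α`-stable set of `D`. -/
def AlphaStable (D : DTheory A) (S : Set (Lit A)) : Prop := alphaOp D S = S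

/-- `S` is a `β`-stable set of `D`. -/
def BetaStable (D : DTheory A) (S : Set (Lit A)) : Prop := betaOp D S = S

/-- The sequence `X_D↑λ`: `X↑0 = ∅`, `X↑(λ+1) = β_D(β_D(X↑λ))`, unions at limits. -/
noncomputable def Xseq (D : DTheory A) : Ordinal.{0} → Set (Lit A) :=
  iterW (fun S => betaOp D (betaOp D S))

/-- The Gelfond–Lifschitz reduct `Π^S`. -/
def glReduct (P : NProgram A) (S : Set A) : NProgram A :=
  {r' | ∃ r ∈ P, r.neg ∩ S = ∅ ∧ r' = NRule.mk r.head r.pos ∅}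

/-- One step of the immediate consequence operator for a NAF-free program. -/
def TPstep (P : NProgram A) (S : Set A) : Set A :=
  {a | ∃ r ∈ P, r.head = a ∧ r.pos ⊆ S}

/-- The finite iterates `T_Π ↑ n` of a NAF-free program. -/
def TPiter (P : NProgram A) : ℕ → Set A
  | 0 => ∅
  | n + 1 => TPstep P (TPiter P n)

/-- `Cl(Π) = T_Π ↑ ω`. -/
def ClP (P : NProgram A) : Set A := ⋃ n, TPiter P n

/-- The Gelfond–Lifschitz operator `γ_Π(S) = Cl(Π^S)`. -/
def gamma (P : NProgram A) (S : Set A) : Set A := ClP (glReduct P S)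

/-- `S` is a stable model of `P`. -/
def StableModel (P : NProgram A) (S : Set A) : Prop := gamma P S = S

/-- `Prod(C[p])`: all sets obtained by choosing one literal other than `p` from each
conflict set containing `p`. -/
def ProdC (D : DTheory A) (p : Lit A) : Set (Set (Lit A)) :=
  {Q | ∃ f : Set (Lit A) → Lit A,
    (∀ c ∈ D.conflicts, p ∈ c → f c ∈ c \ {p}) ∧
    Q = f '' {c ∈ D.conflicts | p ∈ c}}

/-- The logic program translation `Π_D` of a defeasible theory `D` (negative literals
are treated as fresh atoms, so the atoms of the program are the literals of `D`). -/
def lpTrans (D : DTheory A) : NProgram (Lit A) :=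
  {r' | ∃ r ∈ D.Rs, r' = NRule.mk r.head r.body ∅} ∪
  {r' | ∃ r ∈ D.Rd, ∃ Q ∈ ProdC D r.head, r' = NRule.mk r.head r.body Q}

/-- The explicit version `Φ` of a normal program `Π`: atoms of `Φ` are the literals
over the atoms of `Π` (`¬p` being a fresh atom). -/
def explicitVer (P : NProgram A) : NProgram (Lit A) :=
  {r' | ∃ r ∈ P, r' = NRule.mk (Lit.pos r.head) (Lit.pos '' r.pos ∪ Lit.neg '' r.neg) ∅} ∪
  {r' | ∃ p : A, r' = NRule.mk (Lit.neg p) ∅ {Lit.pos p}}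

/-- The minimal conflict sets over atom type `A`. -/
def CMin (A : Type u) : Set (Set (Lit A)) :=
  {c | ∃ p : A, c = ({Lit.pos p, Lit.neg p} : Set (Lit A))}

/-- The defeasible theory translation `D_Π` of a normal program `Π`: each program rule
becomes a strict rule (default literals `∼b` becoming negative literals `¬b`), and each
atom `p` yields a presumption `∅ ⇒ ¬p`; conflict sets are minimal and `≺` is empty. -/
def dtTrans (P : NProgram A) : DTheory A :=
  { rules :=
      {e | ∃ r ∈ P, e = DRule.mk RuleKind.strict
            (Lit.pos '' r.pos ∪ Lit.neg '' r.neg) (Lit.pos r.head)} ∪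
      {e | ∃ p : A, e = DRule.mk RuleKind.defeasible ∅ (Lit.neg p)}
    conflicts := CMin A
    prec := fun _ _ => False }

/-- `M^¬ = M ∪ {¬p : p ∉ M}`, atoms being identified with positive literals. -/
def negCompl (M : Set A) : Set (Lit A) :=
  Lit.pos '' M ∪ Lit.neg '' {p | p ∉ M}

end DLWFS

namespace DLWFS


section AuxLemmas

variable {A : Type*}

lemma TRstep_mono (R : Set (DRule A)) : Monotone (TRstep R) := by
  intro S S' hSS p ⟨r, hr, hh, hb⟩
  exact ⟨r, hr, hh, hb.trans hSS⟩

lemma TRiter_mono (R : Set (DRule A)) : Monotone (TRiter R) := by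
  have step : ∀ n, TRiter R n ⊆ TRiter R (n + 1) := by
    intro n
    induction n with
    | zero => simp [TRiter]
    | succ m ih => exact TRstep_mono R ih
  exact monotone_nat_of_le_succ step

lemma TRiter_subset_ClR (R : Set (DRule A)) (n : ℕ) : TRiter R n ⊆ ClR R :=
  Set.subset_iUnion (TRiter R) n

lemma finite_subset_iter {α : Type*} (s : Set α) (t : ℕ → Set α) (hfin : s.Finite)
    (hmono : Monotone t) (h : s ⊆ ⋃ n, t n) : ∃ n, s ⊆ t n := by
  refine Set.Finite.induction_on (motive := fun s _ => s ⊆ (⋃ n, t n) → ∃ n, s ⊆ t n) s hfin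
    (fun _ => ⟨0, by simp⟩) ?_ h
  intro a s' _ _ ih h
  obtain ⟨n, hn⟩ := ih (fun x hx => h (Set.mem_insert_of_mem _ hx))
  obtain ⟨_, ⟨m, rfl⟩, hm⟩ := h (Set.mem_insert a s')
  exact ⟨max n m, Set.insert_subset (hmono (le_max_right n m) hm)
    (hn.trans (hmono (le_max_left n m)))⟩

lemma head_mem_ClR {R : Set (DRule A)} {r : DRule A} (hr : r ∈ R) (hfin : r.body.Finite)
    (hb : r.body ⊆ ClR R) : r.head ∈ ClR R := by
  obtain ⟨n, hn⟩ := finite_subset_iter r.body (TRiter R) hfin (TRiter_mono R) hb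
  exact TRiter_subset_ClR R (n + 1) ⟨r, hr, rfl, hn⟩

lemma ClR_elim {R : Set (DRule A)} {q : Lit A} (hq : q ∈ ClR R) :
    ∃ r ∈ R, r.head = q ∧ r.body ⊆ ClR R := by
  obtain ⟨_, ⟨n, rfl⟩, hn⟩ := hq
  induction n with
  | zero => cases hn
  | succ m _ =>
    obtain ⟨r, hr, hh, hb⟩ := hn
    exact ⟨r, hr, hh, hb.trans (TRiter_subset_ClR R m)⟩

lemma alphaReduct_subset (D : DTheory A) (M : Set (Lit A)) :
    alphaReduct D M ⊆ D.rules := by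
  rintro r (hr | hr)
  · exact hr.1
  · exact hr.1.1

lemma WA_mono (D : DTheory A) : Monotone (WA D) := by
  intro I J hIJ
  constructor
  · rintro p ⟨r, hr, hh, hb, hcase⟩
    refine ⟨r, hr, hh, hb.trans hIJ.1, ?_⟩
    rcases hcase with hk | ⟨hk, hcond⟩
    · exact Or.inl hk
    · refine Or.inr ⟨hk, fun c hc hpc => ?_⟩
      obtain ⟨q, hq, hall⟩ := hcond c hc hpc
      refine ⟨q, hq, fun s hs hsh => ?_⟩
      rcases hall s hs hsh with h | ⟨x, hx1, hx2⟩
      · exact Or.inl h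
      · exact Or.inr ⟨x, hx1, hIJ.2 hx2⟩
  · rintro p ⟨S, hS, hpS⟩
    refine ⟨S, fun q hq => ?_, hpS⟩
    obtain ⟨h1, h2⟩ := hS q hq
    constructor
    · intro r hr hh
      obtain ⟨x, hx1, hx2⟩ := h1 r hr hh
      exact ⟨x, hx1, hx2.imp (fun h => hIJ.2 h) id⟩
    · intro r hr hh
      rcases h2 r hr hh with ⟨x, hx1, hx2⟩ | ⟨c, hc, hpc, hall⟩
      · exact Or.inl ⟨x, hx1, hx2.imp (fun h => hIJ.2 h) id⟩
      · refine Or.inr ⟨c, hc, hpc, fun q' hq' => ?_⟩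
        obtain ⟨s, hs, hsh, hsb, hor⟩ := hall q' hq'
        exact ⟨s, hs, hsh, hsb.trans hIJ.1, hor⟩

end AuxLemmas

/-- Let `D = ⟨R, C, ∅⟩` be a defeasible theory with `≺ = ∅` and `R_u = ∅`, and let
`⟨T, F⟩` be its well-founded model under ADL. For every `α`-stable set `M` of `D`:
`T ⊆ M` and `F ∩ α_D(M) = ∅`. -/
theorem adl_wfm_within_alpha_stable {A : Type*} (D : DTheory A)
    (hwf : D.WellFormed)
    (hprec : ∀ r s, ¬ D.prec r s)
    (hru : D.Ru = ∅)
    (I : Interp (Lit A)) (hI : IsWFModel (WA D) I) :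
    ∀ M : Set (Lit A), AlphaStable D M → I.1 ⊆ M ∧ I.2 ∩ alphaOp D M = ∅ := by
  intro M hM
  have hMeq : alphaOp D M = M := hM
  have hMCl : ClR (alphaReduct D M) = M := hMeq
  have hfinb : ∀ r ∈ alphaReduct D M, r.body.Finite :=
    fun r hr => hwf.2.2.1 r (alphaReduct_subset D M hr)
  -- The candidate prefixpoint J = (M, Mᶜ)
  set J : Interp (Lit A) := (M, Mᶜ) with hJ
  have hTD : TD D J ⊆ M := by
    rintro p ⟨r, hr, hh, hb, hcase⟩
    subst hh
    have hbM : r.body ⊆ ClR (alphaReduct D M) := by rw [hMCl]; exact hb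
    rcases hcase with hk | ⟨hk, hcond⟩
    · have hrR : r ∈ alphaReduct D M := Or.inl ⟨hr, hk⟩
      rw [← hMCl]
      exact head_mem_ClR hrR (hwf.2.2.1 r hr) hbM
    · have hrR : r ∈ alphaReduct D M := by
        refine Or.inr ⟨⟨hr, hk⟩, fun c hc hpc => ?_⟩
        obtain ⟨q, hq, hall⟩ := hcond c hc hpc
        refine ⟨q, hq, fun hqM => ?_⟩
        rw [← hMCl] at hqM
        obtain ⟨s, hs, hsh, hsb⟩ := ClR_elim hqM
        rcases hall s (alphaReduct_subset D M hs) hsh with hps | ⟨x, hx1, hx2⟩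
        · exact hprec s r hps
        · exact hx2 (hMCl ▸ hsb hx1)
      rw [← hMCl]
      exact head_mem_ClR hrR (hwf.2.2.1 r hr) hbM
  have hUA : UA D J ⊆ Mᶜ := by
    rintro p ⟨S, hS, hpS⟩
    intro hpM
    -- show no element of any TRiter is in S
    have key : ∀ n, ∀ q ∈ TRiter (alphaReduct D M) n, q ∉ S := by
      intro n
      induction n with
      | zero => intro q hq; cases hq
      | succ m ih =>
        rintro q ⟨r, hr, hh, hb⟩ hqS
        obtain ⟨h1, h2⟩ := hS q hqS
        have hbM : r.body ⊆ M := by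
          intro x hx
          rw [← hMCl]
          exact TRiter_subset_ClR _ m (hb hx)
        have hnon : ¬ (r.body ∩ (J.2 ∪ S)).Nonempty := by
          rintro ⟨x, hx1, hx2 | hx2⟩
          · exact hx2 (hbM hx1)
          · exact ih x (hb hx1) hx2
        rcases hr with hrs | ⟨hrd, hcond⟩
        · exact hnon (h1 r hrs hh)
        · rcases h2 r hrd hh with hne | ⟨c, hc, hpc, hall⟩
          · exact hnon hne
          · obtain ⟨q', hq', hq'M⟩ := hcond c hc (hh ▸ hpc)
            have hq'c : q' ∈ c \ {q} := by rw [← hh]; exact hq'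
            obtain ⟨s, hs, hsh, hsb, hor⟩ := hall q' hq'c
            rcases hor with hps | hks
            · exact hprec r s hps
            · have hsR : s ∈ alphaReduct D M := Or.inl ⟨hs, hks⟩
              have : q' ∈ M := by
                rw [← hMCl, ← hsh]
                refine head_mem_ClR hsR (hwf.2.2.1 s hs) ?_
                rw [hMCl]; exact hsb
              exact hq'M this
    rw [← hMCl] at hpM
    obtain ⟨_, ⟨n, rfl⟩, hn⟩ := hpM
    exact key n p hn hpS
  -- I ≤ J via least-fixpoint reasoning
  have hWA : WA D J ≤ J := ⟨hTD, hUA⟩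
  let W : Interp (Lit A) →o Interp (Lit A) := ⟨WA D, WA_mono D⟩
  have hlfp : I ≤ OrderHom.lfp W := by
    have h := hI.2 (OrderHom.lfp W) (W.map_lfp)
    exact ⟨h.1, h.2⟩
  have hle : I ≤ J := hlfp.trans (OrderHom.lfp_le W hWA)
  refine ⟨hle.1, ?_⟩
  rw [hMeq]
  ext x
  simp only [Set.mem_inter_iff, Set.mem_empty_iff_false, iff_false, not_and]
  exact fun hx hxM => hle.2 hx hxM


end DLWFS
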